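/- Let y_{01}(z) = Σ_n (α/2)_n (β/2)_n/(n!((γ+1)/2)_n) z^{2n} on |z|<1, and let δ = (α+β+1-γ)/2 with Re(δ) < 1 and γ, δ, α-β ∉ ℤ. Suppose y_{01} = c⁺₁₁ y_{+1} + c⁺₁₂ y_{+2} near z = 1, where y_{+1} is analytic at 1 with y_{+1}(1) = 1 and y_{+2}(z) = (1-z)^(1-δ) g(z) with g analytic at 1, g(1) = 1, both solving the Heun equation with a = -1, q = 0. Then c⁺₁₁ = Γ((γ+1-α-β)/2)Γ((γ+1)/2)/(Γ((γ+1-α)/2)Γ((γ+1-β)/2)). -/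

import Mathlib

open Finset Nat

/-- The Heun differential operator for the subclass `a = -1`, `q = 0`:
`y ↦ y'' + (γ/z + δ/(z-1) + δ/(z+1)) y' + αβ/((z-1)(z+1)) y`. -/
noncomputable def heunOpSub (α β γ δ : ℂ) (y : ℂ → ℂ) (z : ℂ) : ℂ :=
  deriv (deriv y) z + (γ / z + δ / (z - 1) + δ / (z + 1)) * deriv y z +
    α * β / ((z - 1) * (z + 1)) * y z

open Filter Topology


namespace Stmt11Aux

noncomputable def P (z : ℂ) (n : ℕ) : ℂ := ∏ i ∈ Finset.range n, (z + i)

noncomputable def T (a b c : ℂ) (n : ℕ) : ℂ := P a n * P b n / ((n ! : ℂ) * P c n)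

lemma P_zero (z : ℂ) : P z 0 = 1 := by simp [P]

lemma P_succ (z : ℂ) (n : ℕ) : P z (n + 1) = P z n * (z + n) := Finset.prod_range_succ _ _

lemma P_succ' (z : ℂ) (n : ℕ) : P z (n + 1) = z * P (z + 1) n := by
  rw [P, Finset.prod_range_succ']
  simp only [Nat.cast_zero, add_zero, mul_comm]
  congr 1
  refine Finset.prod_congr rfl fun i _ => ?_
  push_cast; ring

lemma P_ne_zero {z : ℂ} (hz : ∀ j : ℕ, z + j ≠ 0) (n : ℕ) : P z n ≠ 0 :=
  Finset.prod_ne_zero_iff.2 fun i _ => hz i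

lemma T_zero (a b c : ℂ) : T a b c 0 = 1 := by simp [T, P]

lemma norm_T (a b c : ℂ) (n : ℕ) :
    ‖T a b c n‖ = (∏ i ∈ Finset.range n, ‖a + i‖) * (∏ i ∈ Finset.range n, ‖b + i‖) /
      ((n ! : ℝ) * ∏ i ∈ Finset.range n, ‖c + i‖) := by
  simp [T, P, norm_div, norm_mul, norm_prod, Complex.norm_natCast]

/-- The telescoping contiguous-relation identity, pointwise in `n`. -/
lemma tele {a b c : ℂ} (hc : ∀ j : ℕ, c + j ≠ 0) (hcab : c - a - b ≠ 0) (n : ℕ) :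
    T a b c n - (c - a) * (c - b) / (c * (c - a - b)) * T a b (c + 1) n
      = ((n : ℂ) * T a b c n - ((n : ℂ) + 1) * T a b c (n + 1)) / (c - a - b) := by
  have hc0 : c ≠ 0 := by simpa using hc 0
  have hcn : c + n ≠ 0 := hc n
  have hPc : P c n ≠ 0 := P_ne_zero hc n
  have hP1 : c * P (c + 1) n = P c n * (c + n) := by rw [← P_succ', P_succ]
  have hfac : ((n + 1)! : ℂ) = (n + 1) * (n ! : ℂ) := by push_cast [Nat.factorial_succ]; ring
  have hfn : ((n !) : ℂ) ≠ 0 := Nat.cast_ne_zero.2 (Nat.factorial_ne_zero n)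
  have hn1 : ((n : ℂ) + 1) ≠ 0 := by
    have := Nat.cast_ne_zero (R := ℂ).2 (Nat.succ_ne_zero n); push_cast at this; simpa using this
  have hPc1 : P (c + 1) n = P c n * (c + n) / c := by
    field_simp [← hP1]
    exact hP1
  have e1 : T a b (c + 1) n = T a b c n * c / (c + n) := by
    simp only [T]; rw [hPc1]; field_simp
  have e2 : T a b c (n + 1) = T a b c n * ((a + n) * (b + n)) / (((n : ℂ) + 1) * (c + n)) := by
    simp only [T, P_succ, hfac]; field_simp
  rw [e1, e2]
  field_simp
  ring
end Stmt11Aux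

namespace Stmt11Aux

lemma aux_rpow (ρ : ℝ) {m : ℕ} (hm : 1 ≤ m) : (m : ℝ) ^ ρ ≤ 2 ^ |ρ| * ((m : ℝ) + 1) ^ ρ := by
  have hm0 : (0:ℝ) < m := by exact_mod_cast hm
  rcases le_or_gt 0 ρ with h | h
  · rw [abs_of_nonneg h]
    have h1 : (m:ℝ) ^ ρ ≤ ((m:ℝ)+1) ^ ρ := Real.rpow_le_rpow hm0.le (by linarith) h
    have h2 : (1:ℝ) ≤ 2 ^ ρ := Real.one_le_rpow (by norm_num) h
    nlinarith [Real.rpow_nonneg (by positivity : (0:ℝ) ≤ (m:ℝ)+1) ρ]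
  · rw [abs_of_neg h]
    have h1 : ((2:ℝ) * m) ^ ρ ≤ ((m:ℝ)+1) ^ ρ := by
      have : (1:ℝ) ≤ m := by exact_mod_cast hm
      apply Real.rpow_le_rpow_of_nonpos (by linarith) (by linarith) h.le
    have h2 : ((2:ℝ) * m) ^ ρ = 2 ^ ρ * (m:ℝ) ^ ρ := Real.mul_rpow (by norm_num) hm0.le
    have h3 : (2:ℝ) ^ (-ρ) * 2 ^ ρ = 1 := by
      rw [← Real.rpow_add (by norm_num)]; simp
    have h4 : (0:ℝ) < 2 ^ (-ρ) := Real.rpow_pos_of_pos (by norm_num) _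
    calc (m:ℝ) ^ ρ = 2 ^ (-ρ) * (2 ^ ρ * (m:ℝ) ^ ρ) := by rw [← mul_assoc, h3, one_mul]
    _ = 2 ^ (-ρ) * ((2:ℝ)*m) ^ ρ := by rw [h2]
    _ ≤ 2 ^ (-ρ) * ((m:ℝ)+1) ^ ρ := by nlinarith

lemma P_eq_gammaSeq {z : ℂ} (hz : ∀ j : ℕ, z + j ≠ 0) {n : ℕ} (hn : 1 ≤ n) :
    Complex.GammaSeq z n ≠ 0 ∧ P z (n + 1) = (n : ℂ) ^ z * n ! / Complex.GammaSeq z n := by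
  have hP : P z (n + 1) ≠ 0 := P_ne_zero hz _
  have hn0 : (n : ℂ) ≠ 0 := Nat.cast_ne_zero.2 (by omega)
  have hfn : ((n !) : ℂ) ≠ 0 := Nat.cast_ne_zero.2 (Nat.factorial_ne_zero n)
  have hnum : (n : ℂ) ^ z * n ! ≠ 0 := mul_ne_zero (by simp [Complex.cpow_eq_zero_iff, hn0]) hfn
  have hGs : Complex.GammaSeq z n = (n : ℂ) ^ z * n ! / P z (n + 1) := rfl
  refine ⟨by rw [hGs]; exact div_ne_zero hnum hP, ?_⟩
  rw [hGs, div_div_eq_mul_div, mul_div_assoc, mul_comm, div_mul_cancel₀ _ hnum]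

end Stmt11Aux

namespace Stmt11Aux

lemma T_bound (a b c : ℂ) (hc : ∀ j : ℕ, c + j ≠ 0) :
    ∃ C : ℝ, ∀ᶠ n : ℕ in Filter.atTop, ‖T a b c n‖ ≤ C * (n : ℝ) ^ ((a + b - c).re - 1) := by
  by_cases hab : (∃ m : ℕ, a + m = 0) ∨ (∃ m : ℕ, b + m = 0)
  · refine ⟨0, ?_⟩
    obtain ⟨m, hm⟩ | ⟨m, hm⟩ := hab
    · refine Filter.eventually_atTop.2 ⟨m + 1, fun n hn => ?_⟩
      have hmem : m ∈ Finset.range n := Finset.mem_range.2 (by omega)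
      have h0 : ∏ i ∈ Finset.range n, (a + (i:ℂ)) = 0 := Finset.prod_eq_zero hmem hm
      simp [T, P, h0]
    · refine Filter.eventually_atTop.2 ⟨m + 1, fun n hn => ?_⟩
      have hmem : m ∈ Finset.range n := Finset.mem_range.2 (by omega)
      have h0 : ∏ i ∈ Finset.range n, (b + (i:ℂ)) = 0 := Finset.prod_eq_zero hmem hm
      simp [T, P, h0]
  · push_neg at hab
    obtain ⟨ha, hb⟩ := hab
    set ρ := (a + b - c).re with hρdef
    have hΓa : Complex.Gamma a ≠ 0 :=
      Complex.Gamma_ne_zero fun m h => ha m (by rw [h]; ring)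
    have hΓb : Complex.Gamma b ≠ 0 :=
      Complex.Gamma_ne_zero fun m h => hb m (by rw [h]; ring)
    set L := ‖Complex.Gamma a * Complex.Gamma b‖ with hLdef
    have hL0 : 0 < L := norm_pos_iff.2 (mul_ne_zero hΓa hΓb)
    have htab : Filter.Tendsto
        (fun m => ‖Complex.GammaSeq a m * Complex.GammaSeq b m‖) Filter.atTop (𝓝 L) :=
      ((Complex.GammaSeq_tendsto_Gamma a).mul (Complex.GammaSeq_tendsto_Gamma b)).norm
    have htc : Filter.Tendsto (fun m => ‖Complex.GammaSeq c m‖) Filter.atTop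
        (𝓝 ‖Complex.Gamma c‖) := (Complex.GammaSeq_tendsto_Gamma c).norm
    set B := ‖Complex.Gamma c‖ + 1 with hBdef
    have hB0 : 0 < B := by positivity
    refine ⟨2 ^ |ρ| * (B * (2 / L)), ?_⟩
    have hev : ∀ᶠ m : ℕ in Filter.atTop,
        (1 ≤ m ∧ L / 2 ≤ ‖Complex.GammaSeq a m * Complex.GammaSeq b m‖) ∧
          ‖Complex.GammaSeq c m‖ ≤ B := by
      refine (((Filter.eventually_ge_atTop 1).and ?_).and ?_)
      · exact htab.eventually_const_le (by linarith)
      · exact htc.eventually_le_const (by linarith)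
    obtain ⟨N, hN⟩ := Filter.eventually_atTop.1 hev
    refine Filter.eventually_atTop.2 ⟨N + 2, fun n hn => ?_⟩
    set m := n - 1 with hmdef
    have hnm : n = m + 1 := by omega
    obtain ⟨⟨hm1, hL2⟩, hBm⟩ := hN m (by omega)
    have hm0 : (0:ℝ) < m := by exact_mod_cast hm1
    obtain ⟨hGa0, hPa⟩ := P_eq_gammaSeq ha hm1
    obtain ⟨hGb0, hPb⟩ := P_eq_gammaSeq hb hm1
    obtain ⟨hGc0, hPc⟩ := P_eq_gammaSeq hc hm1
    have hmC : ((m:ℕ) : ℂ) ≠ 0 := Nat.cast_ne_zero.2 (by omega)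
    have hcC : ((m:ℕ) : ℂ) ^ c ≠ 0 := by simp [Complex.cpow_eq_zero_iff, hmC]
    have hfm : ((m !) : ℂ) ≠ 0 := Nat.cast_ne_zero.2 (Nat.factorial_ne_zero m)
    have hm1C : ((m:ℂ) + 1) ≠ 0 := by
      intro h
      have := congrArg Complex.re h
      simp at this
      nlinarith
    have hT : T a b c (m + 1) = ((m:ℂ) ^ a * (m:ℂ) ^ b / (m:ℂ) ^ c / ((m:ℂ) + 1)) *
        (Complex.GammaSeq c m / (Complex.GammaSeq a m * Complex.GammaSeq b m)) := by
      simp only [T]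
      rw [hPa, hPb, hPc,
        show (((m + 1)! : ℕ) : ℂ) = ((m:ℂ) + 1) * (m ! : ℂ) by
          push_cast [Nat.factorial_succ]; ring]
      field_simp
    have hnormpow : ∀ w : ℂ, ‖((m:ℕ) : ℂ) ^ w‖ = (m : ℝ) ^ w.re := fun w => by
      rw [show ((m:ℕ) : ℂ) = (((m:ℕ):ℝ) : ℂ) by push_cast; rfl,
        Complex.norm_cpow_eq_rpow_re_of_pos hm0]
    have hnormT : ‖T a b c (m + 1)‖ =
        (m:ℝ) ^ ρ / ((m:ℝ) + 1) * (‖Complex.GammaSeq c m‖ /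
          ‖Complex.GammaSeq a m * Complex.GammaSeq b m‖) := by
      rw [hT, norm_mul, norm_div, norm_div, norm_div, norm_mul, hnormpow, hnormpow, hnormpow,
        ← Real.rpow_add hm0, ← Real.rpow_sub hm0,
        show a.re + b.re - c.re = ρ by simp [hρdef, Complex.add_re, Complex.sub_re]]
      congr 2
      rw [show ((m:ℕ):ℂ) + 1 = (((m + 1 : ℕ)):ℂ) by push_cast; ring, Complex.norm_natCast]
      push_cast; ring
    have hL20 : (0:ℝ) < L / 2 := by linarith
    have step1 : (m:ℝ) ^ ρ / ((m:ℝ) + 1) ≤ 2 ^ |ρ| * ((m:ℝ) + 1) ^ ρ / ((m:ℝ) + 1) :=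
      div_le_div_of_nonneg_right (aux_rpow ρ hm1) (by linarith) |>.trans_eq rfl
    have step2 : ‖Complex.GammaSeq c m‖ / ‖Complex.GammaSeq a m * Complex.GammaSeq b m‖ ≤
        B / (L / 2) := div_le_div₀ hB0.le hBm hL20 hL2
    have hfinal : ‖T a b c (m+1)‖ ≤ 2 ^ |ρ| * (B * (2 / L)) * ((m:ℝ) + 1) ^ (ρ - 1) := by
      rw [hnormT]
      calc (m:ℝ) ^ ρ / ((m:ℝ) + 1) * (‖Complex.GammaSeq c m‖ /
            ‖Complex.GammaSeq a m * Complex.GammaSeq b m‖)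
          ≤ 2 ^ |ρ| * ((m:ℝ) + 1) ^ ρ / ((m:ℝ) + 1) * (B / (L / 2)) := by
            apply mul_le_mul step1 step2 (by positivity) (by positivity)
        _ = 2 ^ |ρ| * (B * (2 / L)) * ((m:ℝ) + 1) ^ (ρ - 1) := by
            rw [Real.rpow_sub (by linarith), Real.rpow_one]
            field_simp
    rw [hnm]
    convert hfinal using 3 <;> push_cast <;> ring

end Stmt11Aux

namespace Stmt11Aux

lemma T_norm_summable (a b c : ℂ) (hc : ∀ j : ℕ, c + j ≠ 0) (hρ : (a + b - c).re < 0) :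
    Summable (fun n => ‖T a b c n‖) := by
  obtain ⟨C, hC⟩ := T_bound a b c hc
  apply Summable.of_norm_bounded_eventually_nat (g := fun n => C * (n:ℝ) ^ ((a + b - c).re - 1))
    ((Real.summable_nat_rpow.2 (by linarith)).mul_left C)
  filter_upwards [hC] with n h
  simpa using h

lemma T_summable (a b c : ℂ) (hc : ∀ j : ℕ, c + j ≠ 0) (hρ : (a + b - c).re < 0) :
    Summable (T a b c) := (T_norm_summable a b c hc hρ).of_norm

lemma T_mul_tendsto (a b c : ℂ) (hc : ∀ j : ℕ, c + j ≠ 0) (hρ : (a + b - c).re < 0) :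
    Filter.Tendsto (fun n : ℕ => (n:ℂ) * T a b c n) Filter.atTop (𝓝 0) := by
  obtain ⟨C, hC⟩ := T_bound a b c hc
  have hg : Filter.Tendsto (fun n : ℕ => C * (n:ℝ) ^ (a + b - c).re) Filter.atTop (𝓝 0) := by
    have h1 : Filter.Tendsto (fun x : ℝ => x ^ (-(-(a + b - c).re))) Filter.atTop (𝓝 0) :=
      tendsto_rpow_neg_atTop (by linarith)
    simp only [neg_neg] at h1
    simpa using (h1.comp tendsto_natCast_atTop_atTop).const_mul C
  apply squeeze_zero_norm' _ hg
  filter_upwards [hC, Filter.eventually_ge_atTop 1] with n h hn1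
  have hn0 : (0:ℝ) < n := by exact_mod_cast hn1
  have : ‖(n:ℂ) * T a b c n‖ = (n:ℝ) * ‖T a b c n‖ := by
    rw [norm_mul, Complex.norm_natCast]
  rw [this]
  calc (n:ℝ) * ‖T a b c n‖ ≤ (n:ℝ) * (C * (n:ℝ) ^ ((a + b - c).re - 1)) := by
        exact mul_le_mul_of_nonneg_left h hn0.le
    _ = C * (n:ℝ) ^ (a + b - c).re := by
        rw [Real.rpow_sub hn0, Real.rpow_one]; field_simp

lemma contiguous (a b c : ℂ) (hc : ∀ j : ℕ, c + j ≠ 0) (hcab : c - a - b ≠ 0)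
    (hρ : (a + b - c).re < 0) :
    ∑' n, T a b c n = (c - a) * (c - b) / (c * (c - a - b)) * ∑' n, T a b (c + 1) n := by
  have hc1 : ∀ j : ℕ, (c + 1) + j ≠ 0 := fun j h => by
    apply hc (j + 1); push_cast; linear_combination h
  have hρ1 : (a + b - (c + 1)).re < 0 := by
    have h : (a + b - (c + 1)).re = (a + b - c).re - 1 := by
      simp [Complex.sub_re, Complex.add_re]
      ring
    rw [h]; linarith
  have hs1 : Summable (T a b c) := T_summable a b c hc hρ
  have hs2 : Summable (T a b (c + 1)) := T_summable a b (c + 1) hc1 hρ1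
  set μ := (c - a) * (c - b) / (c * (c - a - b)) with hμ
  have hpart : ∀ N : ℕ, ∑ n ∈ Finset.range N, (T a b c n - μ * T a b (c + 1) n)
      = ((0:ℂ) * T a b c 0 - (N:ℂ) * T a b c N) / (c - a - b) := by
    intro N
    have hterm : ∀ n : ℕ, T a b c n - μ * T a b (c + 1) n =
        ((fun k : ℕ => (k:ℂ) * T a b c k) n - (fun k : ℕ => (k:ℂ) * T a b c k) (n + 1)) /
          (c - a - b) := by
      intro n
      rw [tele hc hcab n]
      push_cast
      ring
    simp_rw [hterm]
    rw [← Finset.sum_div, Finset.sum_range_sub']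
    norm_num
  have h1 : Filter.Tendsto (fun N => ∑ n ∈ Finset.range N, (T a b c n - μ * T a b (c + 1) n))
      Filter.atTop (𝓝 (∑' n, T a b c n - μ * ∑' n, T a b (c + 1) n)) :=
    (hs1.hasSum.sub (hs2.hasSum.mul_left μ)).tendsto_sum_nat
  have h2 : Filter.Tendsto (fun N => ∑ n ∈ Finset.range N, (T a b c n - μ * T a b (c + 1) n))
      Filter.atTop (𝓝 0) := by
    simp_rw [hpart]
    have h3 := ((tendsto_const_nhds (x := (0:ℂ) * T a b c 0)).sub
      (T_mul_tendsto a b c hc hρ)).div_const (c - a - b)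
    simpa using h3
  have := tendsto_nhds_unique h1 h2
  linear_combination this

lemma iter (a b c : ℂ) (hc : ∀ j : ℕ, c + j ≠ 0) (hcab : ∀ j : ℕ, c - a - b + j ≠ 0)
    (hρ : (a + b - c).re < 0) (M : ℕ) :
    ∑' n, T a b c n = (∏ k ∈ Finset.range M,
      ((c + k - a) * (c + k - b) / ((c + k) * (c + k - a - b)))) * ∑' n, T a b (c + M) n := by
  induction M with
  | zero => simp
  | succ M ih =>
    rw [ih, Finset.prod_range_succ]
    have hcM : ∀ j : ℕ, (c + M) + j ≠ 0 := fun j h => by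
      apply hc (M + j); push_cast; linear_combination h
    have hcabM : (c + M) - a - b ≠ 0 := fun h => by
      apply hcab M; linear_combination h
    have hρM : (a + b - (c + M)).re < 0 := by
      have h : (a + b - (c + (M:ℂ))).re = (a + b - c).re - M := by
        simp [Complex.sub_re, Complex.add_re, Complex.natCast_re]; ring
      have h2 : (0:ℝ) ≤ M := Nat.cast_nonneg M
      rw [h]; linarith
    rw [contiguous a b (c + M) hcM hcabM hρM,
      show ((c + (M:ℂ)) + 1 : ℂ) = c + ((M + 1 : ℕ):ℂ) by push_cast; ring]
    ring

end Stmt11Aux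

namespace Stmt11Aux

lemma prod_tendsto (a b c : ℂ) (hc : ∀ j : ℕ, c + j ≠ 0) (hcab : ∀ j : ℕ, c - a - b + j ≠ 0) :
    Filter.Tendsto (fun M => ∏ k ∈ Finset.range M,
        ((c + k - a) * (c + k - b) / ((c + k) * (c + k - a - b)))) Filter.atTop
      (𝓝 (Complex.Gamma c * Complex.Gamma (c - a - b) /
        (Complex.Gamma (c - a) * Complex.Gamma (c - b)))) := by
  by_cases hdeg : (∃ m : ℕ, c - a + m = 0) ∨ (∃ m : ℕ, c - b + m = 0)
  · have hΓ : Complex.Gamma (c - a) * Complex.Gamma (c - b) = 0 := by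
      obtain ⟨m, hm⟩ | ⟨m, hm⟩ := hdeg
      · rw [(Complex.Gamma_eq_zero_iff _).2 ⟨m, by linear_combination hm⟩, zero_mul]
      · rw [(Complex.Gamma_eq_zero_iff (c - b)).2 ⟨m, by linear_combination hm⟩, mul_zero]
    rw [hΓ, div_zero]
    obtain ⟨m, hm⟩ | ⟨m, hm⟩ := hdeg
    · refine Filter.Tendsto.congr' ?_ (tendsto_const_nhds (x := (0:ℂ)))
      refine Filter.eventually_atTop.2 ⟨m + 1, fun M hM => ?_⟩
      symm
      apply Finset.prod_eq_zero (Finset.mem_range.2 (by omega : m < M))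
      have h0 : c + (m:ℂ) - a = 0 := by linear_combination hm
      rw [h0, zero_mul, zero_div]
    · refine Filter.Tendsto.congr' ?_ (tendsto_const_nhds (x := (0:ℂ)))
      refine Filter.eventually_atTop.2 ⟨m + 1, fun M hM => ?_⟩
      symm
      apply Finset.prod_eq_zero (Finset.mem_range.2 (by omega : m < M))
      have h0 : c + (m:ℂ) - b = 0 := by linear_combination hm
      rw [h0, mul_zero, zero_div]
  · push_neg at hdeg
    obtain ⟨hca, hcb⟩ := hdeg
    have hne : Complex.Gamma (c - a) * Complex.Gamma (c - b) ≠ 0 :=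
      mul_ne_zero (Complex.Gamma_ne_zero fun m h => hca m (by rw [h]; ring))
        (Complex.Gamma_ne_zero fun m h => hcb m (by rw [h]; ring))
    have key : ∀ᶠ n : ℕ in Filter.atTop, Complex.GammaSeq c n * Complex.GammaSeq (c - a - b) n /
          (Complex.GammaSeq (c - a) n * Complex.GammaSeq (c - b) n)
        = ∏ k ∈ Finset.range (n + 1),
          ((c + k - a) * (c + k - b) / ((c + k) * (c + k - a - b))) := by
      filter_upwards [Filter.eventually_ge_atTop 1] with n hn
      have hn0 : (n : ℂ) ≠ 0 := Nat.cast_ne_zero.2 (by omega)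
      obtain ⟨h1, e1⟩ := P_eq_gammaSeq hc hn
      obtain ⟨h2, e2⟩ := P_eq_gammaSeq hcab hn
      obtain ⟨h3, e3⟩ := P_eq_gammaSeq hca hn
      obtain ⟨h4, e4⟩ := P_eq_gammaSeq hcb hn
      have hre : ∏ k ∈ Finset.range (n + 1),
            ((c + k - a) * (c + k - b) / ((c + k) * (c + k - a - b)))
          = P (c - a) (n + 1) * P (c - b) (n + 1) / (P c (n + 1) * P (c - a - b) (n + 1)) := by
        simp only [P]
        rw [← Finset.prod_mul_distrib, ← Finset.prod_mul_distrib, ← Finset.prod_div_distrib]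
        exact Finset.prod_congr rfl fun k _ => by ring
      have hpow : ((n:ℂ)) ^ (c - a) * (n:ℂ) ^ (c - b) = (n:ℂ) ^ c * (n:ℂ) ^ (c - a - b) := by
        rw [← Complex.cpow_add _ _ hn0, ← Complex.cpow_add _ _ hn0]
        congr 1
        ring
      have hfn : ((n !) : ℂ) ≠ 0 := Nat.cast_ne_zero.2 (Nat.factorial_ne_zero n)
      rw [hre, e1, e2, e3, e4]
      have hNc : (n:ℂ) ^ c ≠ 0 := by simp [Complex.cpow_eq_zero_iff, hn0]
      have hNcab : (n:ℂ) ^ (c - a - b) ≠ 0 := by simp [Complex.cpow_eq_zero_iff, hn0]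
      field_simp
      linear_combination (-1 : ℂ) * hpow
    have hlim : Filter.Tendsto (fun n : ℕ => Complex.GammaSeq c n *
        Complex.GammaSeq (c - a - b) n /
          (Complex.GammaSeq (c - a) n * Complex.GammaSeq (c - b) n)) Filter.atTop
        (𝓝 (Complex.Gamma c * Complex.Gamma (c - a - b) /
          (Complex.Gamma (c - a) * Complex.Gamma (c - b)))) :=
      ((Complex.GammaSeq_tendsto_Gamma c).mul
        (Complex.GammaSeq_tendsto_Gamma (c - a - b))).div
        (((Complex.GammaSeq_tendsto_Gamma (c - a)).mul
          (Complex.GammaSeq_tendsto_Gamma (c - b)))) hne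
    have := hlim.congr' key
    exact (Filter.tendsto_add_atTop_iff_nat 1).1 this

end Stmt11Aux

namespace Stmt11Aux

set_option maxHeartbeats 2000000 in
lemma S_tendsto_one (a b c : ℂ) (hc : ∀ j : ℕ, c + j ≠ 0) :
    Filter.Tendsto (fun M : ℕ => ∑' n, T a b (c + M) n) Filter.atTop (𝓝 1) := by
  have ha0 : (0:ℝ) ≤ ‖a‖ := norm_nonneg a
  have hb0 : (0:ℝ) ≤ ‖b‖ := norm_nonneg b
  have hc0 : (0:ℝ) ≤ ‖c‖ := norm_nonneg c
  set pa : ℝ := ‖a‖ + 1 with hpadef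
  set pb : ℝ := ‖b‖ + 1 with hpbdef
  set K : ℝ := pa + pb + 3 with hKdef
  have hpa0 : (0:ℝ) < pa := by rw [hpadef]; linarith
  have hpb0 : (0:ℝ) < pb := by rw [hpbdef]; linarith
  have hK0 : (0:ℝ) < K := by rw [hKdef]; linarith
  have hnormr : ∀ (x : ℝ) (i : ℕ), 0 ≤ x → ‖(x:ℂ) + i‖ = x + i := fun x i hx => by
    have hxi : (0:ℝ) ≤ x + i := by have := Nat.cast_nonneg (α := ℝ) i; linarith
    rw [show ((x:ℝ):ℂ) + (i:ℂ) = (((x + i : ℝ)):ℂ) by push_cast; ring]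
    rw [Complex.norm_real, Real.norm_eq_abs, abs_of_nonneg hxi]
  -- the dominating sequence
  have hcK : ∀ j : ℕ, ((K:ℝ):ℂ) + j ≠ 0 := fun j h => by
    have := congrArg Complex.re h
    simp [Complex.add_re, Complex.ofReal_re, Complex.natCast_re] at this
    have : (0:ℝ) ≤ j := Nat.cast_nonneg j
    linarith
  have hsumbound : Summable (fun n => ‖T (pa:ℂ) (pb:ℂ) (K:ℂ) n‖) := by
    apply T_norm_summable _ _ _ hcK
    have : (((pa:ℝ):ℂ) + ((pb:ℝ):ℂ) - ((K:ℝ):ℂ)).re = pa + pb - K := by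
      simp [Complex.sub_re, Complex.add_re]
    rw [this, hKdef]; linarith
  have hlow : ∀ (M i : ℕ), (M:ℝ) + i - ‖c‖ ≤ ‖c + (M:ℂ) + i‖ := by
    intro M i
    have h1 : ‖((M:ℂ) + i : ℂ)‖ - ‖c + (M:ℂ) + i‖ ≤ ‖((M:ℂ) + i) - (c + (M:ℂ) + i)‖ :=
      norm_sub_norm_le _ _
    have h2 : ‖((M:ℂ) + i) - (c + (M:ℂ) + i)‖ = ‖c‖ := by
      rw [show ((M:ℂ) + i) - (c + (M:ℂ) + i) = -c by ring, norm_neg]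
    have h3 : ‖((M:ℂ) + i : ℂ)‖ = (M:ℝ) + i := by
      rw [show ((M:ℂ) + (i:ℂ)) = (((M + i : ℕ)):ℂ) by push_cast; ring, Complex.norm_natCast]
      push_cast; ring
    rw [h2, h3] at h1
    linarith
  rw [show (1:ℂ) = ∑' n : ℕ, (if n = 0 then (1:ℂ) else 0) by rw [tsum_ite_eq]]
  apply tendsto_tsum_of_dominated_convergence hsumbound
  · -- pointwise limits
    intro k
    rcases Nat.eq_zero_or_pos k with hk | hk
    · subst hk
      simp only [if_pos rfl]
      have : ∀ M : ℕ, T a b (c + M) 0 = 1 := fun M => T_zero _ _ _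
      simp_rw [this]
      exact tendsto_const_nhds
    · rw [if_neg (by omega)]
      set A : ℝ := (∏ i ∈ Finset.range k, ‖a + i‖) * (∏ i ∈ Finset.range k, ‖b + i‖) / k !
        with hAdef
    -- squeeze
      refine squeeze_zero_norm' (a := fun M : ℕ => A / ((M:ℝ) - ‖c‖)) ?_ ?_
      · filter_upwards [Filter.eventually_ge_atTop (⌈‖c‖⌉₊ + 1)] with M hM
        have hM1 : ‖c‖ + 1 ≤ (M:ℝ) := by
          have h1 : (⌈‖c‖⌉₊:ℝ) + 1 ≤ M := by exact_mod_cast hM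
          have := Nat.le_ceil ‖c‖
          linarith
        have hbase : (1:ℝ) ≤ (M:ℝ) - ‖c‖ := by linarith
        have hprodlow : (M:ℝ) - ‖c‖ ≤ ∏ i ∈ Finset.range k, ‖(c + (M:ℂ)) + i‖ := by
          calc (M:ℝ) - ‖c‖ ≤ ((M:ℝ) - ‖c‖) ^ k := le_self_pow₀ hbase (by omega)
            _ = ∏ _i ∈ Finset.range k, ((M:ℝ) - ‖c‖) := by
                rw [Finset.prod_const, Finset.card_range]
            _ ≤ ∏ i ∈ Finset.range k, ‖(c + (M:ℂ)) + i‖ := by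
                apply Finset.prod_le_prod (fun i _ => by linarith) fun i _ => ?_
                have := hlow M i
                have h0 : (0:ℝ) ≤ (i:ℝ) := Nat.cast_nonneg i
                calc (M:ℝ) - ‖c‖ ≤ (M:ℝ) + i - ‖c‖ := by linarith
                  _ ≤ ‖c + (M:ℂ) + i‖ := this
                  _ = ‖(c + (M:ℂ)) + i‖ := by ring_nf
        show ‖T a b (c + (M:ℂ)) k‖ ≤ A / ((M:ℝ) - ‖c‖)
        rw [norm_T, hAdef, div_div]
        have h2 : (0:ℝ) < (M:ℝ) - ‖c‖ := by linarith
        gcongr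
      · have hg : Filter.Tendsto (fun M : ℕ => (M:ℝ) - ‖c‖) Filter.atTop Filter.atTop := by
          have := Filter.tendsto_atTop_add_const_right Filter.atTop (-‖c‖)
            (tendsto_natCast_atTop_atTop (R := ℝ))
          simpa [sub_eq_add_neg] using this
        exact Filter.Tendsto.div_atTop tendsto_const_nhds hg
  · -- uniform bound
    filter_upwards [Filter.eventually_ge_atTop ⌈K + ‖c‖⌉₊] with M hM
    intro n
    have hMK : K + ‖c‖ ≤ (M:ℝ) := by
      have h1 : (⌈K + ‖c‖⌉₊:ℝ) ≤ M := by exact_mod_cast hM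
      have := Nat.le_ceil (K + ‖c‖)
      linarith
    rw [norm_T, norm_T]
    have hprod_nonneg : ∀ (z : ℂ) (m : ℕ), (0:ℝ) ≤ ∏ i ∈ Finset.range m, ‖z + i‖ :=
      fun z m => Finset.prod_nonneg fun i _ => norm_nonneg _
    have hfacpos : (0:ℝ) < (n ! : ℝ) := by exact_mod_cast Nat.factorial_pos n
    have hnum1 : ∏ i ∈ Finset.range n, ‖a + i‖ ≤ ∏ i ∈ Finset.range n, ‖(pa:ℂ) + i‖ := by
      apply Finset.prod_le_prod (fun i _ => norm_nonneg _) fun i _ => ?_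
      rw [hnormr pa i hpa0.le]
      calc ‖a + i‖ ≤ ‖a‖ + ‖(i:ℂ)‖ := norm_add_le _ _
        _ ≤ pa + i := by rw [Complex.norm_natCast, hpadef]; linarith
    have hnum2 : ∏ i ∈ Finset.range n, ‖b + i‖ ≤ ∏ i ∈ Finset.range n, ‖(pb:ℂ) + i‖ := by
      apply Finset.prod_le_prod (fun i _ => norm_nonneg _) fun i _ => ?_
      rw [hnormr pb i hpb0.le]
      calc ‖b + i‖ ≤ ‖b‖ + ‖(i:ℂ)‖ := norm_add_le _ _
        _ ≤ pb + i := by rw [Complex.norm_natCast, hpbdef]; linarith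
    have hnum : (∏ i ∈ Finset.range n, ‖a + i‖) * (∏ i ∈ Finset.range n, ‖b + i‖) ≤
        (∏ i ∈ Finset.range n, ‖(pa:ℂ) + i‖) * (∏ i ∈ Finset.range n, ‖(pb:ℂ) + i‖) :=
      mul_le_mul hnum1 hnum2 (hprod_nonneg b n) (hprod_nonneg _ n)
    have hKfac : ∀ i : ℕ, (0:ℝ) < ‖(K:ℂ) + i‖ := fun i => by
      rw [hnormr K i hK0.le]
      have h0 : (0:ℝ) ≤ (i:ℝ) := Nat.cast_nonneg i
      linarith
    have hden1 : ∏ i ∈ Finset.range n, ‖(K:ℂ) + i‖ ≤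
        ∏ i ∈ Finset.range n, ‖(c + (M:ℂ)) + i‖ := by
      apply Finset.prod_le_prod (fun i _ => (hKfac i).le) fun i _ => ?_
      rw [hnormr K i hK0.le]
      have h0 : (0:ℝ) ≤ (i:ℝ) := Nat.cast_nonneg i
      calc K + i ≤ (M:ℝ) + i - ‖c‖ := by linarith
        _ ≤ ‖c + (M:ℂ) + i‖ := hlow M i
        _ = ‖(c + (M:ℂ)) + i‖ := by ring_nf
    have hden : (n ! : ℝ) * ∏ i ∈ Finset.range n, ‖(K:ℂ) + i‖ ≤
        (n ! : ℝ) * ∏ i ∈ Finset.range n, ‖(c + (M:ℂ)) + i‖ :=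
      mul_le_mul_of_nonneg_left hden1 hfacpos.le
    have hdpos : (0:ℝ) < (n ! : ℝ) * ∏ i ∈ Finset.range n, ‖(K:ℂ) + i‖ :=
      mul_pos hfacpos (Finset.prod_pos fun i _ => hKfac i)
    exact div_le_div₀ (mul_nonneg (hprod_nonneg _ n) (hprod_nonneg _ n)) hnum hdpos hden

lemma gauss (a b c : ℂ) (hc : ∀ j : ℕ, c + j ≠ 0) (hcab : ∀ j : ℕ, c - a - b + j ≠ 0)
    (hρ : (a + b - c).re < 0) :
    ∑' n, T a b c n = Complex.Gamma c * Complex.Gamma (c - a - b) /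
      (Complex.Gamma (c - a) * Complex.Gamma (c - b)) := by
  have h1 := iter a b c hc hcab hρ
  have h4 := (prod_tendsto a b c hc hcab).mul (S_tendsto_one a b c hc)
  rw [mul_one] at h4
  have h5 : Filter.Tendsto (fun M : ℕ => (∏ k ∈ Finset.range M,
      ((c + k - a) * (c + k - b) / ((c + k) * (c + k - a - b)))) * ∑' n, T a b (c + M) n)
      Filter.atTop (𝓝 (∑' n, T a b c n)) := by
    have : (fun M : ℕ => (∏ k ∈ Finset.range M,
        ((c + k - a) * (c + k - b) / ((c + k) * (c + k - a - b)))) * ∑' n, T a b (c + M) n)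
        = fun _ => ∑' n, T a b c n := funext fun M => (h1 M).symm
    rw [this]
    exact tendsto_const_nhds
  exact tendsto_nhds_unique h5 h4

end Stmt11Aux

open Stmt11Aux in
private theorem stmt11' (α β γ δ : ℂ) (hδ : δ = (α + β + 1 - γ) / 2) (hδ1 : δ.re < 1)
    (hγZ : ¬ ∃ m : ℤ, γ = (m : ℂ)) (hδZ : ¬ ∃ m : ℤ, δ = (m : ℂ))
    (y01 : ℂ → ℂ)
    (hy01 : ∀ z : ℂ, ‖z‖ < 1 → y01 z = ∑' n : ℕ,
      (∏ i ∈ Finset.range n, (α / 2 + (i : ℂ))) * (∏ i ∈ Finset.range n, (β / 2 + (i : ℂ))) /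
        ((n ! : ℂ) * ∏ i ∈ Finset.range n, ((γ + 1) / 2 + (i : ℂ))) * z ^ (2 * n))
    (y1 y2 g : ℂ → ℂ)
    (hy1a : AnalyticAt ℂ y1 1) (hy1v : y1 1 = 1)
    (hga : AnalyticAt ℂ g 1) (hgv : g 1 = 1)
    (hy2 : ∀ z : ℂ, y2 z = (1 - z) ^ ((1 : ℂ) - δ) * g z)
    (c1 c2 : ℂ) (r : ℝ) (hr : 0 < r)
    (hconn : ∀ z : ℂ, ‖z‖ < 1 → ‖z - 1‖ < r → y01 z = c1 * y1 z + c2 * y2 z) :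
    c1 = Complex.Gamma ((γ + 1 - α - β) / 2) * Complex.Gamma ((γ + 1) / 2) /
        (Complex.Gamma ((γ + 1 - α) / 2) * Complex.Gamma ((γ + 1 - β) / 2)) := by
  have hc : ∀ j : ℕ, (γ + 1) / 2 + (j:ℂ) ≠ 0 := fun j h => by
    exact hγZ ⟨-(2 * j + 1), by push_cast; linear_combination 2 * h⟩
  have hcab : ∀ j : ℕ, (γ + 1) / 2 - α / 2 - β / 2 + (j:ℂ) ≠ 0 := fun j h => by
    exact hδZ ⟨j + 1, by push_cast; linear_combination hδ - h⟩
  have hρ : (α / 2 + β / 2 - (γ + 1) / 2).re < 0 := by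
    have h1 : α / 2 + β / 2 - (γ + 1) / 2 = δ - 1 := by rw [hδ]; ring
    rw [h1]
    simp only [Complex.sub_re, Complex.one_re]
    linarith
  have hgauss := gauss (α / 2) (β / 2) ((γ + 1) / 2) hc hcab hρ
  -- the sequence approaching 1 from the left
  set ε : ℕ → ℝ := fun j => min r 1 / ((j:ℝ) + 2) with hεdef
  have hε0 : ∀ j, 0 < ε j := fun j => by
    apply div_pos (lt_min hr one_pos)
    positivity
  have hεle : ∀ j, ε j ≤ 1 / 2 := fun j => by
    apply div_le_div₀ one_pos.le (min_le_right r 1) two_pos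
    have : (0:ℝ) ≤ (j:ℝ) := Nat.cast_nonneg j
    linarith
  have hεr : ∀ j, ε j < r := fun j => by
    have h1 : ε j ≤ r / 2 := by
      apply div_le_div₀ hr.le (min_le_left r 1) two_pos
      have : (0:ℝ) ≤ (j:ℝ) := Nat.cast_nonneg j
      linarith
    linarith
  have hεlim : Filter.Tendsto ε Filter.atTop (𝓝 0) := by
    apply Filter.Tendsto.div_atTop (tendsto_const_nhds (x := min r 1))
    exact Filter.tendsto_atTop_add_const_right Filter.atTop 2 (tendsto_natCast_atTop_atTop (R := ℝ))
  set z : ℕ → ℂ := fun j => ((1 - ε j : ℝ) : ℂ) with hzdef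
  have hz1 : ∀ j, ‖z j‖ < 1 := fun j => by
    rw [hzdef]
    simp only [Complex.norm_real, Real.norm_eq_abs]
    rw [abs_of_nonneg (by linarith [hεle j])]
    linarith [hε0 j]
  have hzr : ∀ j, ‖z j - 1‖ < r := fun j => by
    rw [hzdef, show ((1 - ε j : ℝ) : ℂ) - 1 = ((-ε j : ℝ) : ℂ) by push_cast; ring]
    simp only [Complex.norm_real, Real.norm_eq_abs, abs_neg]
    rw [abs_of_nonneg (hε0 j).le]
    exact hεr j
  have hzlim : Filter.Tendsto z Filter.atTop (𝓝 1) := by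
    rw [hzdef, show (1:ℂ) = ((1:ℝ):ℂ) by norm_num]
    apply (Complex.continuous_ofReal.tendsto _).comp
    have := (tendsto_const_nhds (x := (1:ℝ))).sub hεlim
    simpa using this
  -- Limit A : y01 (z j) → ∑' T
  have hTsum := T_norm_summable (α / 2) (β / 2) ((γ + 1) / 2) hc hρ
  have hlimA : Filter.Tendsto (fun j => y01 (z j)) Filter.atTop
      (𝓝 (∑' n, T (α / 2) (β / 2) ((γ + 1) / 2) n)) := by
    have hy : ∀ j, y01 (z j) = ∑' n : ℕ, T (α / 2) (β / 2) ((γ + 1) / 2) n * (z j) ^ (2 * n) :=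
      fun j => by rw [hy01 _ (hz1 j)]; simp only [T, P]
    have h1 : Filter.Tendsto
        (fun j => ∑' n : ℕ, T (α / 2) (β / 2) ((γ + 1) / 2) n * (z j) ^ (2 * n))
        Filter.atTop (𝓝 (∑' n, T (α / 2) (β / 2) ((γ + 1) / 2) n)) := by
      have h2 : ∀ n : ℕ, Filter.Tendsto
          (fun j => T (α / 2) (β / 2) ((γ + 1) / 2) n * (z j) ^ (2 * n))
          Filter.atTop (𝓝 (T (α / 2) (β / 2) ((γ + 1) / 2) n)) := by
        intro n
        have h3 : Filter.Tendsto (fun j => (z j) ^ (2 * n)) Filter.atTop (𝓝 1) := by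
          have := hzlim.pow (2 * n)
          simpa using this
        simpa using tendsto_const_nhds.mul h3
      exact tendsto_tsum_of_dominated_convergence hTsum h2 (Filter.Eventually.of_forall fun j => by
        intro n
        rw [norm_mul, norm_pow]
        exact mul_le_of_le_one_right (norm_nonneg _)
          (pow_le_one₀ (norm_nonneg _) (hz1 j).le))
    exact h1.congr fun j => (hy j).symm
  -- Limit B : y01 (z j) → c1
  have hy1t : Filter.Tendsto (fun j => y1 (z j)) Filter.atTop (𝓝 1) := by
    have := hy1a.continuousAt.tendsto.comp hzlim
    rwa [hy1v] at this
  have hgt : Filter.Tendsto (fun j => g (z j)) Filter.atTop (𝓝 1) := by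
    have := hga.continuousAt.tendsto.comp hzlim
    rwa [hgv] at this
  have hp0 : (0:ℝ) < ((1:ℂ) - δ).re := by
    simp only [Complex.sub_re, Complex.one_re]
    linarith
  have hy2t : Filter.Tendsto (fun j => y2 (z j)) Filter.atTop (𝓝 0) := by
    rw [tendsto_zero_iff_norm_tendsto_zero]
    have hnorm : ∀ j, ‖y2 (z j)‖ = (ε j) ^ (((1:ℂ) - δ).re) * ‖g (z j)‖ := fun j => by
      rw [hy2, norm_mul]
      congr 1
      rw [show (1:ℂ) - z j = ((ε j : ℝ) : ℂ) by rw [hzdef]; push_cast; ring]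
      rw [Complex.norm_cpow_eq_rpow_re_of_pos (hε0 j)]
    have h1 : Filter.Tendsto (fun j => (ε j) ^ (((1:ℂ) - δ).re) * ‖g (z j)‖)
        Filter.atTop (𝓝 (0 * ‖(1:ℂ)‖)) := by
      apply Filter.Tendsto.mul _ (hgt.norm)
      have hcont := (Real.continuousAt_rpow_const 0 (((1:ℂ) - δ).re) (Or.inr hp0.le)).tendsto
      have := hcont.comp hεlim
      rwa [Real.zero_rpow hp0.ne'] at this
    rw [show (0:ℝ) * ‖(1:ℂ)‖ = 0 by simp] at h1
    exact h1.congr fun j => (hnorm j).symm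
  have hlimB : Filter.Tendsto (fun j => y01 (z j)) Filter.atTop (𝓝 (c1 * 1 + c2 * 0)) := by
    have h1 := (tendsto_const_nhds (x := c1)).mul hy1t
    have h2 := (tendsto_const_nhds (x := c2)).mul hy2t
    exact (h1.add h2).congr fun j => (hconn (z j) (hz1 j) (hzr j)).symm
  have hkey := tendsto_nhds_unique hlimA hlimB
  rw [mul_one, mul_zero, add_zero] at hkey
  rw [← hkey, hgauss]
  rw [show (γ + 1 - α - β) / 2 = (γ + 1) / 2 - α / 2 - β / 2 by ring,
    show (γ + 1 - α) / 2 = (γ + 1) / 2 - α / 2 by ring,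
    show (γ + 1 - β) / 2 = (γ + 1) / 2 - β / 2 by ring, mul_comm (Complex.Gamma _)]

/-- The connection coefficient `c⁺₁₁` of `y₀₁(z) = Σ (α/2)_n(β/2)_n/(n!((γ+1)/2)_n) z^{2n}`
at `z = 1` equals `Γ((γ+1-α-β)/2)Γ((γ+1)/2)/(Γ((γ+1-α)/2)Γ((γ+1-β)/2))`. -/
theorem stmt11 (α β γ δ : ℂ) (hδ : δ = (α + β + 1 - γ) / 2) (hδ1 : δ.re < 1)
    (hγZ : ¬ ∃ m : ℤ, γ = (m : ℂ)) (hδZ : ¬ ∃ m : ℤ, δ = (m : ℂ))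
    (hαβZ : ¬ ∃ m : ℤ, α - β = (m : ℂ))
    (y01 : ℂ → ℂ)
    (hy01 : ∀ z : ℂ, ‖z‖ < 1 → y01 z = ∑' n : ℕ,
      (∏ i ∈ Finset.range n, (α / 2 + (i : ℂ))) * (∏ i ∈ Finset.range n, (β / 2 + (i : ℂ))) /
        ((n ! : ℂ) * ∏ i ∈ Finset.range n, ((γ + 1) / 2 + (i : ℂ))) * z ^ (2 * n))
    (y1 y2 g : ℂ → ℂ)
    (hy1a : AnalyticAt ℂ y1 1) (hy1v : y1 1 = 1)
    (hga : AnalyticAt ℂ g 1) (hgv : g 1 = 1)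
    (hy2 : ∀ z : ℂ, y2 z = (1 - z) ^ ((1 : ℂ) - δ) * g z)
    (hode1 : ∀ z : ℂ, z ≠ 1 → ‖z - 1‖ < 1 → heunOpSub α β γ δ y1 z = 0)
    (hode2 : ∀ z : ℂ, z ≠ 1 → ‖z - 1‖ < 1 → heunOpSub α β γ δ y2 z = 0)
    (c1 c2 : ℂ) (r : ℝ) (hr : 0 < r)
    (hconn : ∀ z : ℂ, ‖z‖ < 1 → ‖z - 1‖ < r → y01 z = c1 * y1 z + c2 * y2 z) :
    c1 = Complex.Gamma ((γ + 1 - α - β) / 2) * Complex.Gamma ((γ + 1) / 2) /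
        (Complex.Gamma ((γ + 1 - α) / 2) * Complex.Gamma ((γ + 1 - β) / 2)) := by
  exact stmt11' α β γ δ hδ hδ1 hγZ hδZ y01 hy01 y1 y2 g hy1a hy1v hga hgv hy2 c1 c2 r hr hconn
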